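/- Let c be an introduce node of the nice tree decomposition T with child b and B(c) = B(b) ∪ {v}, v ∉ B(b), and let f ∈ P(Q). Suppose there are a positive integer M such that M·f(K) is an integer for every K ∈ ℛ(c), and binary vectors I_1,…,I_M ∈ {0,1}^(ℛ(b)), each satisfying the constraints relevant to T(b), with f|_b = (1/M) Σ_i I_i. Then there exist binary vectors J_1,…,J_M ∈ {0,1}^(ℛ(c)), each satisfying the constraints relevant to T(c), such that f|_c = (1/M) Σ_i J_i. -/

import Mathlib

/-! Common definitions: CSP instances, configurations, nice tree decompositions,
and the polytopes from Kolman–Koutecký. -/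

/-- A constraint with scope `scope`; its satisfaction depends only on the
coordinates in the scope (it is a relation on the domains of the scope). -/
structure CSPConstraint (n : ℕ) where
  scope : Finset (Fin n)
  sat : (Fin n → ℝ) → Prop
  sat_congr : ∀ z z' : Fin n → ℝ, (∀ v ∈ scope, z v = z' v) → sat z → sat z'

/-- A CSP instance: finite real domains, hard constraints and soft constraints. -/
structure CSPInstance (n : ℕ) where
  dom : Fin n → Finset ℝ
  hard : List (CSPConstraint n)
  soft : List (CSPConstraint n)

variable {n : ℕ}

/-- The list of all constraints (hard and soft). -/
def consList (Q : CSPInstance n) : List (CSPConstraint n) := Q.hard ++ Q.soft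

/-- A feasible assignment: values in the domains, satisfying all hard constraints. -/
def Feasible (Q : CSPInstance n) (z : Fin n → ℝ) : Prop :=
  (∀ v, z v ∈ Q.dom v) ∧ ∀ C ∈ Q.hard, C.sat z

-- Configurations of a set `W` of variables: partial assignments (with `none`
-- playing the role of the symbol `λ`) defined exactly on `W`.
open Classical in
noncomputable def configs (Q : CSPInstance n) (W : Finset (Fin n)) :
    Finset (Fin n → Option ℝ) :=
  (Fintype.piFinset fun v =>
      if v ∈ W then (Q.dom v).image some else ({none} : Finset (Option ℝ))).filter
    (fun K => ∀ C ∈ Q.hard, C.scope ⊆ W → C.sat (fun v => (K v).getD 0))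

/-- Restriction `K↾_W` of a configuration: coordinates outside `W` are set to `λ`. -/
def restrictCfg (K : Fin n → Option ℝ) (W : Finset (Fin n)) : Fin n → Option ℝ :=
  fun v => if v ∈ W then K v else none

/-- A (rooted) nice tree: leaves, introduce nodes, forget nodes and join nodes. -/
inductive NiceTree (n : ℕ) : Type
  | leaf (v : Fin n) : NiceTree n
  | introduce (v : Fin n) (t : NiceTree n) : NiceTree n
  | forget (v : Fin n) (t : NiceTree n) : NiceTree n
  | join (t₁ t₂ : NiceTree n) : NiceTree n

namespace NiceTree

/-- The bag of the root node of a nice tree. -/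
def bag : NiceTree n → Finset (Fin n)
  | leaf v => {v}
  | introduce v t => insert v (bag t)
  | forget v t => (bag t).erase v
  | join t₁ _ => bag t₁

/-- All vertices appearing in bags of the tree. -/
def verts : NiceTree n → Finset (Fin n)
  | leaf v => {v}
  | introduce v t => insert v (verts t)
  | forget _ t => verts t
  | join t₁ t₂ => verts t₁ ∪ verts t₂

/-- Number of nodes of the tree. -/
def size : NiceTree n → ℕ
  | leaf _ => 1
  | introduce _ t => size t + 1
  | forget _ t => size t + 1
  | join t₁ t₂ => size t₁ + size t₂ + 1

/-- Structural validity of a nice tree (in particular, the connectivity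
condition of tree decompositions: an introduced vertex does not occur below,
and vertices shared by the two subtrees of a join lie in its bag). -/
def valid : NiceTree n → Prop
  | leaf _ => True
  | introduce v t => v ∉ verts t ∧ valid t
  | forget v t => v ∈ bag t ∧ valid t
  | join t₁ t₂ => bag t₁ = bag t₂ ∧ verts t₁ ∩ verts t₂ ⊆ bag t₁ ∧ valid t₁ ∧ valid t₂

/-- `isSubtree s t`: `s` is a node (subtree) of `t`. -/
def isSubtree (s : NiceTree n) : NiceTree n → Prop
  | leaf v => s = leaf v
  | introduce v t => s = introduce v t ∨ isSubtree s t
  | forget v t => s = forget v t ∨ isSubtree s t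
  | join t₁ t₂ => s = join t₁ t₂ ∨ isSubtree s t₁ ∨ isSubtree s t₂

-- The configurations relevant to the subtree: `ℛ(a) = ⋃_{b ∈ T(a)} 𝒦(B(b))`.
open Classical in
noncomputable def relConfigs (Q : CSPInstance n) : NiceTree n → Finset (Fin n → Option ℝ)
  | leaf v => configs Q {v}
  | introduce v t => configs Q (insert v (bag t)) ∪ relConfigs Q t
  | forget v t => configs Q ((bag t).erase v) ∪ relConfigs Q t
  | join t₁ t₂ => relConfigs Q t₁ ∪ relConfigs Q t₂

end NiceTree

/-- A valid nice tree decomposition for the CSP instance `Q`: every variable is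
in some bag and every constraint scope is contained in some bag. -/
def IsNiceTreeDecompCSP (Q : CSPInstance n) (T : NiceTree n) : Prop :=
  T.valid ∧ (∀ v : Fin n, v ∈ T.verts) ∧
    ∀ C ∈ consList Q, ∃ s : NiceTree n, s.isSubtree T ∧ C.scope ⊆ s.bag

/-- A valid nice tree decomposition of a graph `G`: every vertex is in some bag
and both endpoints of every edge lie in a common bag. -/
def IsNiceTreeDecompGraph (G : SimpleGraph (Fin n)) (T : NiceTree n) : Prop :=
  T.valid ∧ (∀ v : Fin n, v ∈ T.verts) ∧
    ∀ u v : Fin n, G.Adj u v → ∃ s : NiceTree n, s.isSubtree T ∧ u ∈ s.bag ∧ v ∈ s.bag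

/-- The constraint graph of a CSP instance. -/
def constraintGraph (Q : CSPInstance n) : SimpleGraph (Fin n) where
  Adj u v := u ≠ v ∧ ∃ C ∈ consList Q, u ∈ C.scope ∧ v ∈ C.scope
  symm := by
    refine ⟨?_⟩
    rintro u v ⟨hne, C, hC, hu, hv⟩
    exact ⟨hne.symm, C, hC, hv, hu⟩
  loopless := by
    refine ⟨?_⟩
    rintro v ⟨hne, -⟩
    exact hne rfl

-- The LP constraints of `P(Q)` relevant to the subtree `t`: bag equations and
-- consistency equations at introduce and forget nodes of `t`.
def RelCons (Q : CSPInstance n) (f : (Fin n → Option ℝ) → ℝ) : NiceTree n → Prop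
  | .leaf v => ∑ K ∈ configs Q {v}, f K = 1
  | .introduce v t =>
      RelCons Q f t ∧ (∑ K ∈ configs Q (insert v t.bag), f K = 1) ∧
      ∀ K ∈ configs Q t.bag,
        ∑ K' ∈ (configs Q (insert v t.bag)).filter
            (fun K' => restrictCfg K' t.bag = K), f K' = f K
  | .forget v t =>
      RelCons Q f t ∧ (∑ K ∈ configs Q (t.bag.erase v), f K = 1) ∧
      ∀ K ∈ configs Q (t.bag.erase v),
        ∑ K' ∈ (configs Q t.bag).filter
            (fun K' => restrictCfg K' (t.bag.erase v) = K), f K' = f K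
  | .join t₁ t₂ => RelCons Q f t₁ ∧ RelCons Q f t₂

/-- All the constraints of `P(Q)` relevant to the subtree `t`, including the
bounds `0 ≤ f(K) ≤ 1` for relevant configurations. -/
def RelevantLP (Q : CSPInstance n) (t : NiceTree n) (f : (Fin n → Option ℝ) → ℝ) : Prop :=
  RelCons Q f t ∧ ∀ K ∈ t.relConfigs Q, 0 ≤ f K ∧ f K ≤ 1

/-- The polytope `P(Q) ⊆ ℝ^{𝒦_ℬ}` (coordinates outside `𝒦_ℬ` are zero). -/
def Ppoly (Q : CSPInstance n) (T : NiceTree n) : Set ((Fin n → Option ℝ) → ℝ) :=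
  {f | RelevantLP Q T f ∧ ∀ K, K ∉ T.relConfigs Q → f K = 0}

/-- Extended feasible assignments `(z, h)`. -/
def ExtAssignments (Q : CSPInstance n) :
    Set ((Fin n → ℝ) × (Fin Q.soft.length → ℝ)) :=
  {p | Feasible Q p.1 ∧ ∀ i : Fin Q.soft.length,
      ((Q.soft.get i).sat p.1 ∧ p.2 i = 1) ∨ (¬ (Q.soft.get i).sat p.1 ∧ p.2 i = 0)}

/-- `CSP(Q)`: the convex hull of all extended feasible assignments. -/
def CSPpolytope (Q : CSPInstance n) : Set ((Fin n → ℝ) × (Fin Q.soft.length → ℝ)) :=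
  convexHull ℝ (ExtAssignments Q)

/-- `CSP'(Q)`: the convex hull of all feasible assignments. -/
def CSPpolytope' (Q : CSPInstance n) : Set (Fin n → ℝ) :=
  convexHull ℝ {z | Feasible Q z}

/-- The `y`-variables of the basic LP: one for each `v ∈ V` and `i ∈ D_v`. -/
abbrev YType (Q : CSPInstance n) := (v : Fin n) → {i : ℝ // i ∈ Q.dom v} → ℝ

/-- The `g`-variables of the basic LP: one for each constraint `C_U ∈ 𝒞 ∪ ℋ`
and each configuration `K ∈ 𝒦(U)`. -/
abbrev GType (Q : CSPInstance n) :=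
  (c : Fin (consList Q).length) →
    {K : Fin n → Option ℝ // K ∈ configs Q ((consList Q).get c).scope} → ℝ

/-- The basic LP (1)–(3). -/
def BasicLP (Q : CSPInstance n) (p : YType Q × GType Q) : Prop :=
  (∀ v : Fin n, ∑ i ∈ (Q.dom v).attach, p.1 v i = 1) ∧
  (∀ c : Fin (consList Q).length, ∀ v ∈ ((consList Q).get c).scope,
    ∀ (i : ℝ) (hi : i ∈ Q.dom v),
      ∑ K ∈ (configs Q ((consList Q).get c).scope).attach.filter
          (fun K => K.1 v = some i), p.2 c K = p.1 v ⟨i, hi⟩) ∧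
  (∀ v i, 0 ≤ p.1 v i ∧ p.1 v i ≤ 1) ∧ (∀ c K, 0 ≤ p.2 c K ∧ p.2 c K ≤ 1)

/-- Integrality (all coordinates in `{0,1}`) of a `(y, g)` vector. -/
def IntegralYG (Q : CSPInstance n) (p : YType Q × GType Q) : Prop :=
  (∀ v i, p.1 v i = 0 ∨ p.1 v i = 1) ∧ ∀ c K, p.2 c K = 0 ∨ p.2 c K = 1

-- The map sending a (feasible) assignment `z` to the `(y, g)` vector of the basic LP.
open Classical in
noncomputable def exMap (Q : CSPInstance n) (z : Fin n → ℝ) : YType Q × GType Q :=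
  (fun v i => if z v = i.1 then 1 else 0,
   fun c K => if ∀ u ∈ ((consList Q).get c).scope, K.1 u = some (z u) then 1 else 0)


open NiceTree

section Aux

variable {Q : CSPInstance n}

lemma bag_subset_verts (t : NiceTree n) : t.bag ⊆ t.verts := by
  induction t with
  | leaf v => simp [NiceTree.bag, NiceTree.verts]
  | introduce v t ih =>
      simpa [NiceTree.bag, NiceTree.verts] using Finset.insert_subset_insert v ih
  | forget v t ih =>
      exact (Finset.erase_subset _ _).trans ih
  | join t₁ t₂ ih₁ ih₂ =>
      exact ih₁.trans (Finset.subset_union_left)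

lemma configs_none {W : Finset (Fin n)} {K : Fin n → Option ℝ}
    (hK : K ∈ configs Q W) {v : Fin n} (hv : v ∉ W) : K v = none := by
  classical
  rw [configs, Finset.mem_filter] at hK
  have := (Fintype.mem_piFinset.mp hK.1) v
  simpa [hv] using this

lemma configs_ne_none {W : Finset (Fin n)} {K : Fin n → Option ℝ}
    (hK : K ∈ configs Q W) {v : Fin n} (hv : v ∈ W) : K v ≠ none := by
  classical
  rw [configs, Finset.mem_filter] at hK
  have := (Fintype.mem_piFinset.mp hK.1) v
  rw [if_pos hv] at this
  rcases Finset.mem_image.mp this with ⟨r, _, hr⟩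
  simp [← hr]

lemma relConfigs_none {t : NiceTree n} {K : Fin n → Option ℝ}
    (hK : K ∈ t.relConfigs Q) {v : Fin n} (hv : v ∉ t.verts) : K v = none := by
  induction t with
  | leaf w =>
      exact configs_none hK (by simpa [NiceTree.verts] using hv)
  | introduce w t ih =>
      rw [NiceTree.relConfigs, Finset.mem_union] at hK
      rw [NiceTree.verts, Finset.mem_insert] at hv
      push_neg at hv
      rcases hK with hK | hK
      · refine configs_none hK ?_
        simp only [Finset.mem_insert]
        push_neg
        exact ⟨hv.1, fun h => hv.2 (bag_subset_verts t h)⟩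
      · exact ih hK hv.2
  | forget w t ih =>
      rw [NiceTree.relConfigs, Finset.mem_union] at hK
      rw [NiceTree.verts] at hv
      rcases hK with hK | hK
      · exact configs_none hK fun h =>
          hv (bag_subset_verts t (Finset.mem_of_mem_erase h))
      · exact ih hK hv
  | join t₁ t₂ ih₁ ih₂ =>
      rw [NiceTree.relConfigs, Finset.mem_union] at hK
      rw [NiceTree.verts, Finset.mem_union] at hv
      push_neg at hv
      rcases hK with hK | hK
      · exact ih₁ hK hv.1
      · exact ih₂ hK hv.2

lemma configs_bag_subset_relConfigs (t : NiceTree n) :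
    configs Q t.bag ⊆ t.relConfigs Q := by
  induction t with
  | leaf v => simp [NiceTree.bag, NiceTree.relConfigs]
  | introduce v t ih =>
      rw [NiceTree.bag, NiceTree.relConfigs]
      exact Finset.subset_union_left
  | forget v t ih =>
      rw [NiceTree.bag, NiceTree.relConfigs]
      exact Finset.subset_union_left
  | join t₁ t₂ ih₁ ih₂ =>
      rw [NiceTree.bag, NiceTree.relConfigs]
      exact ih₁.trans Finset.subset_union_left

lemma relCons_sum_bag {f : (Fin n → Option ℝ) → ℝ} {t : NiceTree n}
    (h : RelCons Q f t) : ∑ K ∈ configs Q t.bag, f K = 1 := by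
  induction t with
  | leaf v => exact h
  | introduce v t ih => exact h.2.1
  | forget v t ih => exact h.2.1
  | join t₁ t₂ ih₁ ih₂ => exact ih₁ h.1

lemma valid_subtree {s t : NiceTree n} (hs : s.isSubtree t) (ht : t.valid) :
    s.valid := by
  induction t with
  | leaf v => rw [hs]; exact ht
  | introduce v t ih =>
      rcases hs with h | h
      · rw [h]; exact ht
      · exact ih h ht.2
  | forget v t ih =>
      rcases hs with h | h
      · rw [h]; exact ht
      · exact ih h ht.2
  | join t₁ t₂ ih₁ ih₂ =>
      rcases hs with h | h | h
      · rw [h]; exact ht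
      · exact ih₁ h ht.2.2.1
      · exact ih₂ h ht.2.2.2

lemma relCons_subtree {f : (Fin n → Option ℝ) → ℝ} {s t : NiceTree n}
    (hs : s.isSubtree t) (ht : RelCons Q f t) : RelCons Q f s := by
  induction t with
  | leaf v => rw [hs]; exact ht
  | introduce v t ih =>
      rcases hs with h | h
      · rw [h]; exact ht
      · exact ih h ht.1
  | forget v t ih =>
      rcases hs with h | h
      · rw [h]; exact ht
      · exact ih h ht.1
  | join t₁ t₂ ih₁ ih₂ =>
      rcases hs with h | h | h
      · rw [h]; exact ht
      · exact ih₁ h ht.1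
      · exact ih₂ h ht.2

lemma relConfigs_subtree {s t : NiceTree n} (hs : s.isSubtree t) :
    s.relConfigs Q ⊆ t.relConfigs Q := by
  induction t with
  | leaf v => rw [hs]
  | introduce v t ih =>
      rcases hs with h | h
      · rw [h]
      · rw [NiceTree.relConfigs]
        exact (ih h).trans Finset.subset_union_right
  | forget v t ih =>
      rcases hs with h | h
      · rw [h]
      · rw [NiceTree.relConfigs]
        exact (ih h).trans Finset.subset_union_right
  | join t₁ t₂ ih₁ ih₂ =>
      rcases hs with h | h | h
      · rw [h]
      · rw [NiceTree.relConfigs]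
        exact (ih₁ h).trans Finset.subset_union_left
      · rw [NiceTree.relConfigs]
        exact (ih₂ h).trans Finset.subset_union_right

lemma relCons_congr {f g : (Fin n → Option ℝ) → ℝ} {t : NiceTree n}
    (hfg : ∀ K ∈ t.relConfigs Q, f K = g K) (hf : RelCons Q f t) :
    RelCons Q g t := by
  induction t with
  | leaf v =>
      rw [RelCons] at hf ⊢
      rw [← hf]
      exact Finset.sum_congr rfl fun K hK =>
        (hfg K (by simpa [NiceTree.relConfigs] using hK)).symm
  | introduce v t ih =>
      have hsub₁ : configs Q (insert v t.bag) ⊆ (NiceTree.introduce v t).relConfigs Q :=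
        Finset.subset_union_left
      have hsub₂ : t.relConfigs Q ⊆ (NiceTree.introduce v t).relConfigs Q :=
        Finset.subset_union_right
      refine ⟨ih (fun K hK => hfg K (hsub₂ hK)) hf.1, ?_, ?_⟩
      · rw [← hf.2.1]
        exact Finset.sum_congr rfl fun K hK => (hfg K (hsub₁ hK)).symm
      · intro K hK
        rw [← hfg K (hsub₂ (configs_bag_subset_relConfigs t hK)), ← hf.2.2 K hK]
        exact Finset.sum_congr rfl fun K' hK' =>
          (hfg K' (hsub₁ (Finset.mem_of_mem_filter K' hK'))).symm
  | forget v t ih =>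
      have hsub₁ : configs Q (t.bag.erase v) ⊆ (NiceTree.forget v t).relConfigs Q :=
        Finset.subset_union_left
      have hsub₂ : t.relConfigs Q ⊆ (NiceTree.forget v t).relConfigs Q :=
        Finset.subset_union_right
      refine ⟨ih (fun K hK => hfg K (hsub₂ hK)) hf.1, ?_, ?_⟩
      · rw [← hf.2.1]
        exact Finset.sum_congr rfl fun K hK => (hfg K (hsub₁ hK)).symm
      · intro K hK
        rw [← hfg K (hsub₁ hK), ← hf.2.2 K hK]
        exact Finset.sum_congr rfl fun K' hK' =>
          (hfg K' (hsub₂ (configs_bag_subset_relConfigs t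
            (Finset.mem_of_mem_filter K' hK')))).symm
  | join t₁ t₂ ih₁ ih₂ =>
      exact ⟨ih₁ (fun K hK => hfg K (Finset.mem_union_left _ hK)) hf.1,
             ih₂ (fun K hK => hfg K (Finset.mem_union_right _ hK)) hf.2⟩

end Aux

section Aux2

variable {Q : CSPInstance n}

lemma restrict_mem_configs {W W' : Finset (Fin n)} (hWW : W ⊆ W')
    {K : Fin n → Option ℝ} (hK : K ∈ configs Q W') :
    restrictCfg K W ∈ configs Q W := by
  classical
  rw [configs, Finset.mem_filter] at hK ⊢
  constructor
  · rw [Fintype.mem_piFinset]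
    intro u
    have := (Fintype.mem_piFinset.mp hK.1) u
    by_cases hu : u ∈ W
    · rw [if_pos hu]
      rw [if_pos (hWW hu)] at this
      simpa [restrictCfg, hu] using this
    · simp [restrictCfg, hu]
  · intro C hC hCW
    refine C.sat_congr _ _ ?_ (hK.2 C hC (hCW.trans hWW))
    intro u hu
    simp [restrictCfg, hCW hu]

lemma binary_sum_one {α : Type*} [DecidableEq α] {s : Finset α} {f : α → ℝ}
    (hbin : ∀ K, f K = 0 ∨ f K = 1) (hsum : ∑ K ∈ s, f K = 1) :
    ∃ K₀ ∈ s, f K₀ = 1 ∧ ∀ K ∈ s, K ≠ K₀ → f K = 0 := by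
  have hex : ∃ K₀ ∈ s, f K₀ ≠ 0 := by
    by_contra h
    push_neg at h
    rw [Finset.sum_eq_zero h] at hsum
    norm_num at hsum
  obtain ⟨K₀, hK₀s, hK₀⟩ := hex
  have h1 : f K₀ = 1 := (hbin K₀).resolve_left hK₀
  refine ⟨K₀, hK₀s, h1, ?_⟩
  have hz : ∑ K ∈ s.erase K₀, f K = 0 := by
    have := Finset.add_sum_erase s f hK₀s
    rw [hsum, h1] at this
    linarith
  intro K hKs hne
  have := (Finset.sum_eq_zero_iff_of_nonneg (fun K _ => by rcases hbin K with h | h <;> simp [h])).mp hz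
  exact this K (Finset.mem_erase.mpr ⟨hne, hKs⟩)

lemma exists_fiber_assignment {α β : Type*} [DecidableEq α] [DecidableEq β] [Inhabited β]
    (t : Finset β) : ∀ (s : Finset α) (m : β → ℕ), (∑ b ∈ t, m b = s.card) →
    ∃ g : α → β, (∀ a ∈ s, g a ∈ t) ∧ ∀ b ∈ t, (s.filter (fun a => g a = b)).card = m b := by
  classical
  induction t using Finset.induction_on with
  | empty =>
      intro s m h
      simp only [Finset.sum_empty] at h
      exact ⟨fun _ => default, by simp [Finset.card_eq_zero.mp h.symm], by simp⟩
  | insert b₀ t' hb0 ih =>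
      intro s m h
      rw [Finset.sum_insert hb0] at h
      have hle : m b₀ ≤ s.card := by omega
      obtain ⟨s₀, hs₀sub, hs₀card⟩ := Finset.exists_subset_card_eq hle
      have hcard : ∑ b ∈ t', m b = (s \ s₀).card := by
        rw [Finset.card_sdiff_of_subset hs₀sub, hs₀card]; omega
      obtain ⟨g', hg'mem, hg'card⟩ := ih (s \ s₀) m hcard
      refine ⟨fun a => if a ∈ s₀ then b₀ else g' a, ?_, ?_⟩
      · intro a ha
        by_cases h0 : a ∈ s₀
        · simp [h0]
        · show (if a ∈ s₀ then b₀ else g' a) ∈ insert b₀ t'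
          rw [if_neg h0]
          exact Finset.mem_insert_of_mem (hg'mem a (Finset.mem_sdiff.mpr ⟨ha, h0⟩))
      · intro b hb
        rcases Finset.mem_insert.mp hb with hb | hb
        · rw [hb]
          have : s.filter (fun a => (if a ∈ s₀ then b₀ else g' a) = b₀) = s₀ := by
            ext a
            simp only [Finset.mem_filter]
            constructor
            · rintro ⟨has, hif⟩
              by_contra h0
              rw [if_neg h0] at hif
              exact hb0 (hif ▸ hg'mem a (Finset.mem_sdiff.mpr ⟨has, h0⟩))
            · intro h0
              exact ⟨hs₀sub h0, by rw [if_pos h0]⟩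
          rw [this, hs₀card]
        · have : s.filter (fun a => (if a ∈ s₀ then b₀ else g' a) = b) =
              (s \ s₀).filter (fun a => g' a = b) := by
            ext a
            simp only [Finset.mem_filter, Finset.mem_sdiff]
            constructor
            · rintro ⟨has, hif⟩
              by_cases h0 : a ∈ s₀
              · rw [if_pos h0] at hif
                exact absurd (hif ▸ hb) hb0
              · rw [if_neg h0] at hif
                exact ⟨⟨has, h0⟩, hif⟩
            · rintro ⟨⟨has, h0⟩, hg⟩
              exact ⟨has, by rw [if_neg h0]; exact hg⟩
          rw [this, hg'card b hb]

end Aux2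

/-- Inductive step at an introduce node. -/
theorem introduce_step (n : ℕ) (Q : CSPInstance n) (T : NiceTree n)
    (hT : IsNiceTreeDecompCSP Q T) (v : Fin n) (b : NiceTree n)
    (hv : v ∉ b.bag)
    (hsub : (NiceTree.introduce v b).isSubtree T)
    (f : (Fin n → Option ℝ) → ℝ) (hf : f ∈ Ppoly Q T)
    (M : ℕ) (hM : 0 < M)
    (hint : ∀ K ∈ (NiceTree.introduce v b).relConfigs Q, ∃ k : ℤ, (M : ℝ) * f K = (k : ℝ))
    (I : Fin M → ((Fin n → Option ℝ) → ℝ))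
    (hIbin : ∀ i K, I i K = 0 ∨ I i K = 1)
    (hIrel : ∀ i, RelevantLP Q b (I i))
    (hIavg : ∀ K ∈ b.relConfigs Q, f K = (1 / (M : ℝ)) * ∑ i, I i K) :
    ∃ J : Fin M → ((Fin n → Option ℝ) → ℝ),
      (∀ i K, J i K = 0 ∨ J i K = 1) ∧
      (∀ i, RelevantLP Q (NiceTree.introduce v b) (J i)) ∧
      ∀ K ∈ (NiceTree.introduce v b).relConfigs Q,
        f K = (1 / (M : ℝ)) * ∑ i, J i K := by
  classical
  obtain ⟨⟨hfT, hfbd⟩, hf0⟩ := hf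
  have hMR : (M : ℝ) ≠ 0 := Nat.cast_ne_zero.mpr hM.ne'
  have hvalidc : (NiceTree.introduce v b).valid := valid_subtree hsub hT.1
  have hvverts : v ∉ b.verts := hvalidc.1
  have hfc : RelCons Q f (NiceTree.introduce v b) := relCons_subtree hsub hfT
  have hrelsub : (NiceTree.introduce v b).relConfigs Q ⊆ T.relConfigs Q :=
    relConfigs_subtree hsub
  have hdisj : ∀ K ∈ b.relConfigs Q, K ∉ configs Q (insert v b.bag) := fun K hK hK' =>
    configs_ne_none hK' (Finset.mem_insert_self v _) (relConfigs_none hK hvverts)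
  -- the unique configuration of the bag of `b` picked by `I i`
  have hKofex : ∀ i : Fin M, ∃ K₀ ∈ configs Q b.bag, I i K₀ = 1 ∧
      ∀ K ∈ configs Q b.bag, K ≠ K₀ → I i K = 0 :=
    fun i => binary_sum_one (hIbin i) (relCons_sum_bag (hIrel i).1)
  choose Kof hKofmem hKof1 hKof0 using hKofex
  have hIval : ∀ i, ∀ K ∈ configs Q b.bag, I i K = if K = Kof i then 1 else 0 := by
    intro i K hK
    by_cases h : K = Kof i
    · rw [if_pos h, h]; exact hKof1 i
    · rw [if_neg h]; exact hKof0 i K hK h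
  -- counting: the number of `i` picking `K` is `M * f K`
  have hcount : ∀ K ∈ configs Q b.bag,
      ((Finset.univ.filter (fun i => Kof i = K)).card : ℝ) = (M : ℝ) * f K := by
    intro K hK
    have h1 : f K = (1 / (M : ℝ)) * ∑ i, I i K :=
      hIavg K (configs_bag_subset_relConfigs b hK)
    have h2 : (∑ i, I i K) = ((Finset.univ.filter (fun i => Kof i = K)).card : ℝ) := by
      rw [← Finset.sum_boole]
      refine Finset.sum_congr rfl fun i _ => ?_
      rw [hIval i K hK]
      by_cases h : K = Kof i
      · rw [if_pos h, if_pos h.symm]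
      · rw [if_neg h, if_neg fun hh => h hh.symm]
    rw [← h2, h1]
    field_simp
  -- integral multiplicities of the extended configurations
  have hmex : ∀ K' : Fin n → Option ℝ, ∃ m : ℕ,
      K' ∈ configs Q (insert v b.bag) → (m : ℝ) = (M : ℝ) * f K' := by
    intro K'
    by_cases h : K' ∈ configs Q (insert v b.bag)
    · have hK'rel : K' ∈ (NiceTree.introduce v b).relConfigs Q :=
        Finset.mem_union_left _ h
      obtain ⟨k, hk⟩ := hint K' hK'rel
      have hnn : (0 : ℝ) ≤ (M : ℝ) * f K' :=
        mul_nonneg (Nat.cast_nonneg M) (hfbd K' (hrelsub hK'rel)).1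
      have hk0 : (0 : ℤ) ≤ k := by rw [hk] at hnn; exact_mod_cast hnn
      refine ⟨k.toNat, fun _ => ?_⟩
      rw [hk]
      exact_mod_cast congrArg (Int.cast : ℤ → ℝ) (Int.toNat_of_nonneg hk0)
    · exact ⟨0, fun hh => absurd hh h⟩
  choose mNat hmNat using hmex
  -- the multiplicities of the extensions of `K` sum to the multiplicity of `K`
  have hsumK : ∀ K ∈ configs Q b.bag,
      ∑ K' ∈ (configs Q (insert v b.bag)).filter
        (fun K' => restrictCfg K' b.bag = K), mNat K' =
      (Finset.univ.filter (fun i => Kof i = K)).card := by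
    intro K hK
    have hcast : ((∑ K' ∈ (configs Q (insert v b.bag)).filter
        (fun K' => restrictCfg K' b.bag = K), mNat K' : ℕ) : ℝ) =
        ((Finset.univ.filter (fun i => Kof i = K)).card : ℝ) := by
      push_cast
      rw [hcount K hK, ← hfc.2.2 K hK, Finset.mul_sum]
      exact Finset.sum_congr rfl fun K' hK' =>
        hmNat K' (Finset.mem_of_mem_filter K' hK')
    exact_mod_cast hcast
  -- choose an assignment of extensions to the indices `i`
  letI : Inhabited (Fin n → Option ℝ) := ⟨fun _ => none⟩
  have hgex : ∀ K : Fin n → Option ℝ, ∃ g : Fin M → (Fin n → Option ℝ),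
      K ∈ configs Q b.bag →
      ((∀ i ∈ Finset.univ.filter (fun i => Kof i = K),
          g i ∈ (configs Q (insert v b.bag)).filter
            (fun K' => restrictCfg K' b.bag = K)) ∧
        ∀ K' ∈ (configs Q (insert v b.bag)).filter
            (fun K' => restrictCfg K' b.bag = K),
          ((Finset.univ.filter (fun i => Kof i = K)).filter
            (fun i => g i = K')).card = mNat K') := by
    intro K
    by_cases hK : K ∈ configs Q b.bag
    · obtain ⟨g, hg1, hg2⟩ := exists_fiber_assignment
        ((configs Q (insert v b.bag)).filter (fun K' => restrictCfg K' b.bag = K))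
        (Finset.univ.filter (fun i => Kof i = K)) mNat (hsumK K hK)
      exact ⟨g, fun _ => ⟨hg1, hg2⟩⟩
    · exact ⟨fun _ => default, fun hh => absurd hh hK⟩
  choose gFun hgFun using hgex
  set ext : Fin M → (Fin n → Option ℝ) := fun i => gFun (Kof i) i with hextdef
  have hextmem : ∀ i, ext i ∈ (configs Q (insert v b.bag)).filter
      (fun K' => restrictCfg K' b.bag = Kof i) := by
    intro i
    exact (hgFun (Kof i) (hKofmem i)).1 i (Finset.mem_filter.mpr ⟨Finset.mem_univ i, rfl⟩)
  have hextcfg : ∀ i, ext i ∈ configs Q (insert v b.bag) :=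
    fun i => Finset.mem_of_mem_filter _ (hextmem i)
  have hextres : ∀ i, restrictCfg (ext i) b.bag = Kof i :=
    fun i => (Finset.mem_filter.mp (hextmem i)).2
  -- define the new binary vectors
  set J : Fin M → ((Fin n → Option ℝ) → ℝ) := fun i K =>
    if K ∈ configs Q (insert v b.bag) then (if K = ext i then 1 else 0) else I i K
    with hJdef
  have hJval1 : ∀ i K, K ∈ configs Q (insert v b.bag) →
      J i K = if K = ext i then 1 else 0 := fun i K hK => if_pos hK
  have hJagree : ∀ i, ∀ K ∈ b.relConfigs Q, J i K = I i K :=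
    fun i K hK => if_neg (hdisj K hK)
  have hJbin : ∀ i K, J i K = 0 ∨ J i K = 1 := by
    intro i K
    simp only [hJdef]
    by_cases h : K ∈ configs Q (insert v b.bag)
    · rw [if_pos h]
      by_cases h' : K = ext i
      · right; rw [if_pos h']
      · left; rw [if_neg h']
    · rw [if_neg h]; exact hIbin i K
  -- the sum of J i over the extended configurations of K
  have hJsum : ∀ i (K : Fin n → Option ℝ), K ∈ configs Q b.bag →
      ∑ K' ∈ (configs Q (insert v b.bag)).filter
        (fun K' => restrictCfg K' b.bag = K), J i K' =
      if K = Kof i then 1 else 0 := by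
    intro i K hK
    have h1 : ∑ K' ∈ (configs Q (insert v b.bag)).filter
        (fun K' => restrictCfg K' b.bag = K), J i K' =
        ∑ K' ∈ (configs Q (insert v b.bag)).filter
        (fun K' => restrictCfg K' b.bag = K), (if K' = ext i then (1:ℝ) else 0) :=
      Finset.sum_congr rfl fun K' hK' =>
        hJval1 i K' (Finset.mem_of_mem_filter K' hK')
    rw [h1, Finset.sum_ite_eq' _ (ext i) (fun _ => (1:ℝ))]
    by_cases h : K = Kof i
    · rw [if_pos h]
      rw [if_pos]
      exact Finset.mem_filter.mpr ⟨hextcfg i, by rw [hextres i, h]⟩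
    · rw [if_neg h]
      rw [if_neg]
      intro hmem
      exact h ((Finset.mem_filter.mp hmem).2.symm.trans (hextres i))
  refine ⟨J, hJbin, ?_, ?_⟩
  · -- RelevantLP at the introduce node
    intro i
    constructor
    · refine ⟨relCons_congr (fun K hK => (hJagree i K hK).symm) (hIrel i).1, ?_, ?_⟩
      · have h1 : ∑ K ∈ configs Q (insert v b.bag), J i K =
            ∑ K ∈ configs Q (insert v b.bag), (if K = ext i then (1:ℝ) else 0) :=
          Finset.sum_congr rfl fun K hK => hJval1 i K hK
        rw [h1, Finset.sum_ite_eq' _ (ext i) (fun _ => (1:ℝ)), if_pos (hextcfg i)]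
      · intro K hK
        rw [hJsum i K hK, hJagree i K (configs_bag_subset_relConfigs b hK),
          hIval i K hK]
    · intro K _
      rcases hJbin i K with h | h <;> rw [h] <;> norm_num
  · -- the averaging property
    intro K hK
    rcases Finset.mem_union.mp hK with hK1 | hK1
    · -- K is an extended configuration
      have hK₀ : restrictCfg K b.bag ∈ configs Q b.bag :=
        restrict_mem_configs (Finset.subset_insert v b.bag) hK1
      have hKt : K ∈ (configs Q (insert v b.bag)).filter
          (fun K' => restrictCfg K' b.bag = restrictCfg K b.bag) :=
        Finset.mem_filter.mpr ⟨hK1, rfl⟩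
      have hfib : ∀ i : Fin M, ext i = K ↔
          (Kof i = restrictCfg K b.bag ∧ gFun (restrictCfg K b.bag) i = K) := by
        intro i
        constructor
        · intro h
          have h2 : restrictCfg K b.bag = Kof i := by rw [← h]; exact hextres i
          exact ⟨h2.symm, by rw [h2]; exact h⟩
        · rintro ⟨h1, h2⟩
          rw [hextdef]
          simp only
          rw [h1, h2]
      have hcard : (Finset.univ.filter (fun i => ext i = K)).card = mNat K := by
        have he : Finset.univ.filter (fun i : Fin M => ext i = K) =
            (Finset.univ.filter (fun i => Kof i = restrictCfg K b.bag)).filter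
              (fun i => gFun (restrictCfg K b.bag) i = K) := by
          rw [Finset.filter_filter]
          exact Finset.filter_congr fun i _ => by
            rw [hfib i]
        rw [he]
        exact (hgFun (restrictCfg K b.bag) hK₀).2 K hKt
      have hsum : ∑ i, J i K = ((mNat K : ℕ) : ℝ) := by
        have h1 : ∑ i, J i K = ∑ i, (if ext i = K then (1:ℝ) else 0) := by
          refine Finset.sum_congr rfl fun i _ => ?_
          rw [hJval1 i K hK1]
          by_cases h : K = ext i
          · rw [if_pos h, if_pos h.symm]
          · rw [if_neg h, if_neg fun hh => h hh.symm]
        rw [h1, Finset.sum_boole, hcard]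
      rw [hsum, hmNat K hK1]
      field_simp
    · -- K is a configuration relevant to the subtree of b
      rw [hIavg K hK1]
      congr 1
      exact Finset.sum_congr rfl fun i _ => (hJagree i K hK1).symm
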